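/- Let G be a group and 𝓕 the forest monoid with a Zappa–Szép action pair (g,E) ↦ g·E, (g,E) ↦ g^E such that for each k ≥ 1 the cloning map κ_k : G → G, g ↦ g^{λ_k}, is injective, and let ρ : G → (ℕ₊ → ℕ₊) be a function with g·λ_k = λ_{ρ(g)(k)} for all g ∈ G and k ≥ 1. Then for all k < ℓ and all g ∈ G: if ρ(g)(k) < ρ(g)(ℓ) then ρ(κ_ℓ(g))(k) = ρ(g)(k) and ρ(κ_k(g))(ℓ+1) = ρ(g)(ℓ) + 1; and if ρ(g)(k) > ρ(g)(ℓ) then ρ(κ_ℓ(g))(k) = ρ(g)(k) + 1 and ρ(κ_k(g))(ℓ+1) = ρ(g)(ℓ). -/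

import Mathlib

/-- The defining relation of the forest monoid: `λ_j * λ_i = λ_i * λ_{j+1}` for `i < j`. -/
def ForestRel : FreeMonoid ℕ+ → FreeMonoid ℕ+ → Prop := fun a b =>
  ∃ i j : ℕ+, i < j ∧ a = FreeMonoid.of j * FreeMonoid.of i ∧
    b = FreeMonoid.of i * FreeMonoid.of (j + 1)

/-- The congruence generated by the forest relations. -/
def ForestCon : Con (FreeMonoid ℕ+) := conGen ForestRel

/-- The forest monoid `𝓕`. -/
abbrev ForestMonoid := ForestCon.Quotient

/-- The generator `λ_k` of the forest monoid. -/
def lam (k : ℕ+) : ForestMonoid := ForestCon.mk' (FreeMonoid.of k)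


namespace ForestAux

/-- The "skip `k`" map on `ℕ`. -/
def sig (k : ℕ+) : Function.End ℕ := fun n => if n < (k : ℕ) then n else n + 1

lemma sig_comp (a b : ℕ+) (n : ℕ) :
    sig b (sig a n) = n + (if min (a : ℕ) (b : ℕ) ≤ n then 1 else 0)
      + (if max (b : ℕ) ((a : ℕ) + 1) ≤ n + 1 then 1 else 0) := by
  simp only [sig]
  split_ifs <;> omega

/-- Representation of the free monoid in the opposite of `Function.End ℕ`. -/
def Φ : FreeMonoid ℕ+ →* (Function.End ℕ)ᵐᵒᵖ :=
  FreeMonoid.lift fun k => MulOpposite.op (sig k)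

lemma forestCon_le : ForestCon ≤ Con.ker Φ := by
  apply Con.conGen_le.mpr
  rintro x y ⟨i, j, hij, rfl, rfl⟩
  show Φ _ = Φ _
  simp only [Φ, map_mul, FreeMonoid.lift_eval_of, ← MulOpposite.op_mul]
  congr 1
  funext n
  have h : (i : ℕ) < j := hij
  show sig i (sig j n) = sig (j + 1) (sig i n)
  simp only [sig, PNat.add_coe, PNat.one_coe]
  split_ifs <;> omega

lemma thresholds_eq (p q p' q' : ℕ) (hpq : p < q) (hpq' : p' < q')
    (H : ∀ n, n + (if p ≤ n then 1 else 0) + (if q ≤ n + 1 then 1 else 0)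
        = n + (if p' ≤ n then 1 else 0) + (if q' ≤ n + 1 then 1 else 0)) :
    p = p' ∧ q = q' := by
  have h1 := H p
  have h2 := H p'
  have hp : p = p' := by split_ifs at h1 h2 <;> omega
  subst hp
  refine ⟨rfl, ?_⟩
  have h3 := H (q - 1)
  have h4 := H (q' - 1)
  split_ifs at h3 h4 <;> omega

lemma key (a b c d : ℕ+) (hca : (c : ℕ) < (a : ℕ))
    (H : ∀ n, sig b (sig a n) = sig d (sig c n)) :
    (b : ℕ) = (c : ℕ) ∧ (d : ℕ) = (a : ℕ) + 1 := by
  have H' : ∀ n, n + (if min (a : ℕ) (b : ℕ) ≤ n then 1 else 0)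
      + (if max (b : ℕ) ((a : ℕ) + 1) ≤ n + 1 then 1 else 0)
      = n + (if min (c : ℕ) (d : ℕ) ≤ n then 1 else 0)
      + (if max (d : ℕ) ((c : ℕ) + 1) ≤ n + 1 then 1 else 0) := by
    intro n
    rw [← sig_comp, ← sig_comp]
    exact H n
  obtain ⟨e1, e2⟩ := thresholds_eq _ _ _ _ (by omega) (by omega) H'
  omega

lemma two_letter (a b c d : ℕ+) (h : lam a * lam b = lam c * lam d) :
    ∀ n, sig b (sig a n) = sig d (sig c n) := by
  intro n
  have h' : ForestCon (FreeMonoid.of a * FreeMonoid.of b)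
      (FreeMonoid.of c * FreeMonoid.of d) := by
    rw [← Con.eq]
    simpa [lam, ← map_mul] using h
  have hΦ := forestCon_le h'
  simp only [Con.ker_rel, Φ, map_mul, FreeMonoid.lift_eval_of, ← MulOpposite.op_mul] at hΦ
  have := MulOpposite.op_injective hΦ
  exact congrFun this n

end ForestAux

/-- compatibility: given a Zappa–Szép action pair of a group `G` and the
forest monoid `𝓕` with injective cloning maps `κ_k : g ↦ g^{λ_k}` and a function `ρ`
with `g·λ_k = λ_{ρ(g)(k)}`, the compatibility conditions hold for all `k < ℓ`. -/
theorem cloning_compatibility {G : Type*} [Group G]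
    (act : G → ForestMonoid → ForestMonoid) (pw : G → ForestMonoid → G)
    (h1 : ∀ E, act 1 E = E)
    (h2 : ∀ g h : G, ∀ E, act (g * h) E = act g (act h E))
    (h3 : ∀ g : G, pw g 1 = g)
    (h4 : ∀ g : G, ∀ E F, pw g (E * F) = pw (pw g E) F)
    (h5 : ∀ E, pw (1 : G) E = 1)
    (h6 : ∀ g h : G, ∀ E, pw (g * h) E = pw g (act h E) * pw h E)
    (h7 : ∀ g : G, act g 1 = 1)
    (h8 : ∀ g : G, ∀ E F, act g (E * F) = act g E * act (pw g E) F)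
    (hinj : ∀ k : ℕ+, Function.Injective (fun g : G => pw g (lam k)))
    (ρ : G → ℕ+ → ℕ+)
    (hρ : ∀ (g : G) (k : ℕ+), act g (lam k) = lam (ρ g k)) :
    ∀ (k l : ℕ+), k < l → ∀ g : G,
      (ρ g k < ρ g l →
        ρ (pw g (lam l)) k = ρ g k ∧ ρ (pw g (lam k)) (l + 1) = ρ g l + 1) ∧
      (ρ g l < ρ g k →
        ρ (pw g (lam l)) k = ρ g k + 1 ∧ ρ (pw g (lam k)) (l + 1) = ρ g l) := by
  intro k l hkl g
  have hrel : lam l * lam k = lam k * lam (l + 1) := by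
    show ((FreeMonoid.of l : FreeMonoid ℕ+) : ForestMonoid) * (FreeMonoid.of k : FreeMonoid ℕ+)
        = ((FreeMonoid.of k : FreeMonoid ℕ+) : ForestMonoid) * (FreeMonoid.of (l + 1) : FreeMonoid ℕ+)
    rw [← Con.coe_mul, ← Con.coe_mul, Con.eq]
    exact ConGen.Rel.of _ _ ⟨k, l, hkl, rfl, rfl⟩
  have main : lam (ρ g l) * lam (ρ (pw g (lam l)) k)
      = lam (ρ g k) * lam (ρ (pw g (lam k)) (l + 1)) := by
    rw [← hρ g l, ← hρ (pw g (lam l)) k, ← hρ g k, ← hρ (pw g (lam k)) (l + 1),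
      ← h8, ← h8, hrel]
  have H := ForestAux.two_letter _ _ _ _ main
  constructor
  · intro hlt
    obtain ⟨e1, e2⟩ := ForestAux.key _ _ _ _ (by exact_mod_cast hlt) H
    constructor
    · exact PNat.coe_injective e1
    · apply PNat.coe_injective
      rw [e2, PNat.add_coe, PNat.one_coe]
  · intro hlt
    obtain ⟨e1, e2⟩ := ForestAux.key _ _ _ _ (by exact_mod_cast hlt)
      (fun n => (H n).symm)
    constructor
    · apply PNat.coe_injective
      rw [e2, PNat.add_coe, PNat.one_coe]
    · exact PNat.coe_injective e1
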